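/- arXiv:2406.12565 — 5 statements merged into one kernel-verified Lean document; each statement's English description precedes it below -/
import Mathlib

section
/- The map δ_{1-β,β} : 𝒲 → 𝓕_{1-β} ⊗ 𝓕_β defined by δ(L_n) = Σ_{i=0}^{n-1} (i - nβ) v_i ⊗ w_{n-i} for n ≥ 1, δ(L_0) = 0, and δ(L_n) = -Σ_{i=n}^{-1} (i - nβ) v_i ⊗ w_{n-i} for n ≤ -1, is a 1-cocycle: δ([L_m, L_n]) = L_m · δ(L_n) - L_n · δ(L_m) for all m, n ∈ ℤ. -/
/-- The action of the Witt basis element `L m` on `𝓕_α ⊗ 𝓕_β`, realized on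
`(ℤ × ℤ) →₀ ℂ` with basis `v_i ⊗ w_j ↦ single (i, j) 1`:
`L_m · (v_i ⊗ w_j) = -(i + αm) v_{m+i} ⊗ w_j - (j + βm) v_i ⊗ w_{m+j}`. -/
noncomputable def tact (α β : ℂ) (m : ℤ) : ((ℤ × ℤ) →₀ ℂ) →ₗ[ℂ] ((ℤ × ℤ) →₀ ℂ) :=
  Finsupp.lsum ℂ fun p => LinearMap.toSpanSingleton ℂ ((ℤ × ℤ) →₀ ℂ)
    ((-((p.1 : ℂ) + α * m)) • Finsupp.single (m + p.1, p.2) (1 : ℂ)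
      + (-((p.2 : ℂ) + β * m)) • Finsupp.single (p.1, m + p.2) (1 : ℂ))

/-- A family `d n = d(L_n)` is a 1-cocycle of the Witt algebra with
coefficients in `𝓕_α ⊗ 𝓕_β`: `d([L_m, L_n]) = L_m · d(L_n) - L_n · d(L_m)`. -/
def IsCocycle (α β : ℂ) (d : ℤ → ((ℤ × ℤ) →₀ ℂ)) : Prop :=
  ∀ m n : ℤ, ((m - n : ℤ) : ℂ) • d (m + n) = tact α β m (d n) - tact α β n (d m)

/-- `d` is a 1-coboundary: `d(L_n) = L_n · u` for a fixed `u` in the module. -/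
def IsCoboundary (α β : ℂ) (d : ℤ → ((ℤ × ℤ) →₀ ℂ)) : Prop :=
  ∃ u : (ℤ × ℤ) →₀ ℂ, ∀ n : ℤ, d n = tact α β n u

/-- The map `δ_{1-β,β} : 𝒲 → 𝓕_{1-β} ⊗ 𝓕_β`. -/
noncomputable def deltaβ (β : ℂ) (n : ℤ) : (ℤ × ℤ) →₀ ℂ :=
  if 1 ≤ n then
    ∑ i ∈ Finset.Icc (0 : ℤ) (n - 1), ((i : ℂ) - n * β) • Finsupp.single (i, n - i) (1 : ℂ)
  else if n = 0 then 0
  else - ∑ i ∈ Finset.Icc n (-1 : ℤ), ((i : ℂ) - n * β) • Finsupp.single (i, n - i) (1 : ℂ)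

lemma tact_apply (α β : ℂ) (m : ℤ) (f : (ℤ × ℤ) →₀ ℂ) (a b : ℤ) :
    tact α β m f (a, b) =
      -(((a : ℂ) - m) + α * m) * f (a - m, b) - (((b : ℂ) - m) + β * m) * f (a, b - m) := by
  induction f using Finsupp.induction_linear with
  | zero => simp
  | add f g hf hg => simp only [map_add, Finsupp.add_apply, hf, hg]; ring
  | single p c =>
    obtain ⟨i, j⟩ := p
    rw [show tact α β m (Finsupp.single (i, j) c)
        = c • ((-((i : ℂ) + α * m)) • Finsupp.single (m + i, j) (1 : ℂ)
          + (-((j : ℂ) + β * m)) • Finsupp.single (i, m + j) (1 : ℂ)) from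
      Finsupp.lsum_single _ _ _ _]
    simp only [Finsupp.smul_apply, Finsupp.add_apply, Finsupp.single_apply, Prod.mk.injEq,
      smul_eq_mul, mul_ite, mul_one, mul_zero,
      show (m + i = a ∧ j = b) ↔ (i = a - m ∧ j = b) from by omega,
      show (i = a ∧ m + j = b) ↔ (i = a ∧ j = b - m) from by omega]
    split_ifs with h1 h2 h2
    · obtain ⟨rfl, rfl⟩ := h1
      have hm : m = 0 := by omega
      subst hm; push_cast; ring
    · obtain ⟨rfl, rfl⟩ := h1; push_cast; ring
    · obtain ⟨rfl, rfl⟩ := h2; push_cast; ring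
    · simp

lemma sum_single_apply (c : ℤ → ℂ) (n a b lo hi : ℤ) :
    (∑ i ∈ Finset.Icc lo hi, c i • Finsupp.single (i, n - i) (1 : ℂ)) (a, b)
      = if b = n - a ∧ lo ≤ a ∧ a ≤ hi then c a else 0 := by
  rw [Finset.sum_apply']
  rw [Finset.sum_congr rfl (fun i _ => show (c i • Finsupp.single (i, n - i) (1 : ℂ)) (a, b)
      = if i = a then (if b = n - a then c i else 0) else 0 from by
    simp only [Finsupp.smul_apply, Finsupp.single_apply, Prod.mk.injEq, smul_eq_mul,
      mul_ite, mul_one, mul_zero]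
    split_ifs <;> (first | rfl | (exfalso; omega)))]
  rw [Finset.sum_ite_eq' (Finset.Icc lo hi) a (fun i => if b = n - a then c i else 0)]
  simp only [Finset.mem_Icc]
  split_ifs <;> (first | rfl | (exfalso; omega))

lemma deltaβ_apply (β : ℂ) (n a b : ℤ) :
    deltaβ β n (a, b) =
      if b = n - a then
        ((if 0 ≤ a then (1 : ℂ) else 0) - (if n ≤ a then (1 : ℂ) else 0)) * ((a : ℂ) - n * β)
      else 0 := by
  unfold deltaβ
  rcases lt_trichotomy n 0 with hn | rfl | hn
  · rw [if_neg (by omega), if_neg (by omega), Finsupp.neg_apply, sum_single_apply]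
    split_ifs <;> (first | ring1 | (exfalso; omega))
  · rw [if_neg (by omega), if_pos rfl]
    split_ifs <;> simp
  · rw [if_pos (by omega), sum_single_apply]
    split_ifs <;> (first | ring1 | (exfalso; omega))

/-- `δ_{1-β,β}` is a 1-cocycle of the Witt algebra with
coefficients in `𝓕_{1-β} ⊗ 𝓕_β`. -/
theorem delta_isCocycle (β : ℂ) : IsCocycle (1 - β) β (deltaβ β) := by
  intro m n
  ext p
  obtain ⟨a, b⟩ := p
  rw [Finsupp.smul_apply, Finsupp.sub_apply, tact_apply, tact_apply,
    deltaβ_apply, deltaβ_apply, deltaβ_apply, deltaβ_apply, deltaβ_apply]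
  by_cases hb : b = m + n - a
  · subst hb
    rw [if_pos (show m + n - a = m + n - a from rfl),
      if_pos (show m + n - a = n - (a - m) by omega),
      if_pos (show m + n - a - m = n - a by omega),
      if_pos (show m + n - a = m - (a - n) by omega),
      if_pos (show m + n - a - n = m - a by omega)]
    simp only [show (n ≤ a - m) ↔ (m + n ≤ a) from by omega,
      show (m ≤ a - n) ↔ (m + n ≤ a) from by omega,
      show ((0 : ℤ) ≤ a - m) ↔ (m ≤ a) from by omega,
      show ((0 : ℤ) ≤ a - n) ↔ (n ≤ a) from by omega, smul_eq_mul]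
    split_ifs <;> push_cast <;> ring
  · rw [if_neg (by omega), if_neg (by omega), if_neg (by omega), if_neg (by omega),
      if_neg (by omega)]
    simp
end

section
/- The map δ⁵_{0,0} : 𝒲 → 𝓕_0 ⊗ 𝓕_0 defined by δ⁵(L_0) = v_0 ⊗ w_0, δ⁵(L_1) = 0, δ⁵(L_n) = -Σ_{i=1}^{n-1} v_i ⊗ w_{n-i} for n ≥ 2, and δ⁵(L_n) = Σ_{i=n}^{0} v_i ⊗ w_{n-i} for n ≤ -1, is a 1-cocycle of the Witt algebra with coefficients in 𝓕_0 ⊗ 𝓕_0. -/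
/-- The map `δ⁵_{0,0} : 𝒲 → 𝓕_0 ⊗ 𝓕_0`. -/
noncomputable def d5 (n : ℤ) : (ℤ × ℤ) →₀ ℂ :=
  if n = 0 then Finsupp.single ((0 : ℤ), (0 : ℤ)) (1 : ℂ)
  else if n = 1 then 0
  else if 2 ≤ n then - ∑ i ∈ Finset.Icc (1 : ℤ) (n - 1), Finsupp.single (i, n - i) (1 : ℂ)
  else ∑ i ∈ Finset.Icc n (0 : ℤ), Finsupp.single (i, n - i) (1 : ℂ)

/-- Congruence for a coefficient multiplying an indicator. -/
lemma mul_ite_congr (P : Prop) [Decidable P] (a b c : ℂ) (h : P → a = b) :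
    a * (if P then c else 0) = b * (if P then c else 0) := by
  split_ifs with hp
  · rw [h hp]
  · simp

/-- Evaluation of `tact 0 0 m` at a point. -/
lemma tact_apply_s5 (m : ℤ) (f : (ℤ × ℤ) →₀ ℂ) (i j : ℤ) :
    (tact 0 0 m f) (i, j) =
      -((i : ℂ) - m) * f (i - m, j) - ((j : ℂ) - m) * f (i, j - m) := by
  induction f using Finsupp.induction_linear with
  | zero => simp
  | add f g hf hg =>
      rw [map_add]
      simp only [Finsupp.add_apply, hf, hg]; ring
  | single p c =>
      obtain ⟨p1, p2⟩ := p
      simp only [tact, Finsupp.lsum_apply, zero_mul, add_zero,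
        Finsupp.sum_single_index, smul_zero, zero_smul,
        LinearMap.toSpanSingleton_apply, Finsupp.smul_apply, Finsupp.add_apply,
        Finsupp.single_apply, Prod.mk.injEq, smul_eq_mul]
      simp only [show ((m + p1 = i ∧ p2 = j)) ↔ (p1 = i - m ∧ p2 = j) from by omega,
          show ((p1 = i ∧ m + p2 = j)) ↔ (p1 = i ∧ p2 = j - m) from by omega]
      rw [(mul_ite_congr (p1 = i - m ∧ p2 = j) (-((i:ℂ) - m)) (-(p1:ℂ)) c
            (fun hc => by rw [hc.1]; push_cast; ring) : _ = _),
          (mul_ite_congr (p1 = i ∧ p2 = j - m) ((j:ℂ) - m) ((p2:ℂ)) c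
            (fun hc => by rw [hc.2]; push_cast; ring) : _ = _)]
      split_ifs <;> ring1

/-- The coefficient of `d5 n` at `(k, n - k)`, as an integer. -/
def Cz (n k : ℤ) : ℤ :=
  if n = 0 then (if k = 0 then 1 else 0)
  else if n = 1 then 0
  else if 2 ≤ n then (if 1 ≤ k ∧ k ≤ n - 1 then -1 else 0)
  else (if n ≤ k ∧ k ≤ 0 then 1 else 0)

set_option maxHeartbeats 4000000 in
/-- The scalar cocycle identity for the coefficients. -/
lemma key (m n k : ℤ) :
    (m - n) * Cz (m + n) k =
      -(k - m) * Cz n (k - m) - (n - k) * Cz n k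
        + (k - n) * Cz m (k - n) + (m - k) * Cz m k := by
  unfold Cz
  split_ifs <;> omega

/-- Evaluation of `d5 n` at a point. -/
lemma d5_apply (n i j : ℤ) :
    d5 n (i, j) = if i + j = n then (Cz n i : ℂ) else 0 := by
  unfold d5 Cz
  split_ifs with h1 h2 h3 <;>
    simp only [Finsupp.single_apply, Finsupp.coe_zero, Pi.zero_apply,
      Finsupp.neg_apply, Finset.sum_apply', Prod.mk.injEq, ite_and] <;>
    (try rw [Finset.sum_ite_eq' (Finset.Icc (1:ℤ) (n-1)) i
        (fun x => if n - x = j then (1:ℂ) else 0)]) <;>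
    (try rw [Finset.sum_ite_eq' (Finset.Icc n (0:ℤ)) i
        (fun x => if n - x = j then (1:ℂ) else 0)]) <;>
    (try simp only [Finset.mem_Icc]) <;>
    (try split_ifs) <;>
    first | (exfalso; omega) | norm_num

/-- `δ⁵_{0,0}` is a 1-cocycle of the Witt algebra with
coefficients in `𝓕_0 ⊗ 𝓕_0`. -/
theorem d5_isCocycle : IsCocycle 0 0 d5 := by
  intro m n
  apply Finsupp.ext
  rintro ⟨i, j⟩
  rw [Finsupp.smul_apply, Finsupp.sub_apply, tact_apply_s5, tact_apply_s5,
    d5_apply, d5_apply, d5_apply, d5_apply, d5_apply, smul_eq_mul]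
  by_cases h : i + j = m + n
  · rw [if_pos h, if_pos (show i - m + j = n by omega), if_pos (show i + (j - m) = n by omega),
      if_pos (show i - n + j = m by omega), if_pos (show i + (j - n) = m by omega)]
    have h2 : ((m : ℂ) - n) * (Cz (m + n) i : ℂ) =
        -((i : ℂ) - m) * Cz n (i - m) - ((n : ℂ) - i) * Cz n i
          + ((i : ℂ) - n) * Cz m (i - n) + ((m : ℂ) - i) * Cz m i := by
      exact_mod_cast key m n i
    have hj : (j : ℂ) = (m : ℂ) + n - i := by
      have hj' : j = m + n - i := by omega
      exact_mod_cast congrArg (Int.cast : ℤ → ℂ) hj'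
    rw [hj]
    push_cast
    linear_combination h2
  · rw [if_neg h, if_neg (show ¬(i - m + j = n) by omega), if_neg (show ¬(i + (j - m) = n) by omega),
      if_neg (show ¬(i - n + j = m) by omega), if_neg (show ¬(i + (j - n) = m) by omega)]
    ring
end

section
/- The 1-cocycle δ⁵_{0,0} of the Witt algebra with coefficients in 𝓕_0 ⊗ 𝓕_0 is not a 1-coboundary. -/
/-- the 1-cocycle `δ⁵_{0,0}` is not a 1-coboundary. -/
theorem d5_not_coboundary : ¬ IsCoboundary 0 0 d5 := by
  rintro ⟨u, h⟩
  have h0 := congrArg (fun f => f (0, 0)) (h 0)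
  simp only [d5, if_pos rfl, tact, Finsupp.lsum_apply, Finsupp.sum_apply,
    LinearMap.toSpanSingleton_apply, smul_eq_mul] at h0
  simp only [if_true, Finsupp.single_eq_same, Finsupp.sum] at h0
  rw [Finset.sum_eq_zero] at h0
  · exact one_ne_zero h0
  · intro p _
    by_cases hp : p = (0, 0)
    · subst hp; simp
    · simp only [Finsupp.smul_apply, Finsupp.add_apply, Finsupp.smul_apply,
        Finsupp.single_apply, smul_eq_mul]
      rw [if_neg, if_neg] <;> simp_all [Prod.ext_iff]
end

section
/- The maps δ¹_{0,0}(L_m) = v_0 ⊗ w_m and δ²_{0,0}(L_m) = m v_0 ⊗ w_m are 1-cocycles of the Witt algebra with coefficients in 𝓕_0 ⊗ 𝓕_0, and neither is a 1-coboundary. -/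
lemma tact_single' (α β : ℂ) (m : ℤ) (p : ℤ × ℤ) (c : ℂ) :
    tact α β m (Finsupp.single p c) =
      c • ((-((p.1 : ℂ) + α * m)) • Finsupp.single (m + p.1, p.2) (1 : ℂ)
        + (-((p.2 : ℂ) + β * m)) • Finsupp.single (p.1, m + p.2) (1 : ℂ)) := by
  simp [tact, Finsupp.lsum_single]

lemma tact_apply_coeff' (α β : ℂ) (m : ℤ) (u : (ℤ × ℤ) →₀ ℂ) (q : ℤ × ℤ) :
    tact α β m u q = ∑ p ∈ u.support, u p *
      ((-((p.1 : ℂ) + α * m)) * (if (m + p.1, p.2) = q then 1 else 0)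
        + (-((p.2 : ℂ) + β * m)) * (if (p.1, m + p.2) = q then 1 else 0)) := by
  rw [tact, Finsupp.lsum_apply, Finsupp.sum_apply, Finsupp.sum]
  refine Finset.sum_congr rfl fun p _ => ?_
  simp only [LinearMap.toSpanSingleton_apply, Finsupp.smul_apply, Finsupp.add_apply,
    Finsupp.single_apply, smul_eq_mul]

lemma tact_zero_coeff' (u : (ℤ × ℤ) →₀ ℂ) : tact 0 0 0 u (0, 0) = 0 := by
  rw [tact_apply_coeff']
  refine Finset.sum_eq_zero fun p hp => ?_
  rcases p with ⟨i, j⟩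
  simp only [zero_mul, mul_zero, add_zero, Int.cast_zero, zero_add]
  by_cases h : ((i, j) : ℤ × ℤ) = ((0 : ℤ), (0 : ℤ))
  · simp only [Prod.mk.injEq] at h; simp [h.1, h.2]
  · rw [if_neg h]; ring

lemma tact_n_coeff' (u : (ℤ × ℤ) →₀ ℂ) (n : ℤ) (hn : ((-n, n) : ℤ × ℤ) ∉ u.support) :
    tact 0 0 n u (0, n) = 0 := by
  rw [tact_apply_coeff']
  refine Finset.sum_eq_zero fun p hp => ?_
  rcases p with ⟨i, j⟩
  simp only [zero_mul, mul_zero, add_zero, Int.cast_zero, zero_add]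
  by_cases h1 : ((n + i, j) : ℤ × ℤ) = ((0 : ℤ), n)
  · have : ((i, j) : ℤ × ℤ) = (-n, n) := by
      rw [Prod.ext_iff] at h1 ⊢; constructor <;> [omega; exact h1.2]
    exact absurd (this ▸ hp) hn
  · rw [if_neg h1]
    by_cases h2 : ((i, n + j) : ℤ × ℤ) = ((0 : ℤ), n)
    · have hj : j = 0 := by rw [Prod.ext_iff] at h2; omega
      rw [if_pos h2, hj]; push_cast; ring
    · rw [if_neg h2]; ring

/-- the maps `δ¹_{0,0}(L_m) = v_0 ⊗ w_m` and
`δ²_{0,0}(L_m) = m v_0 ⊗ w_m` are 1-cocycles of the Witt algebra with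
coefficients in `𝓕_0 ⊗ 𝓕_0`, and neither is a 1-coboundary. -/
theorem d1_d2_cocycles_not_coboundaries :
    IsCocycle 0 0 (fun m => Finsupp.single ((0 : ℤ), m) (1 : ℂ)) ∧
    IsCocycle 0 0 (fun m => (m : ℂ) • Finsupp.single ((0 : ℤ), m) (1 : ℂ)) ∧
    ¬ IsCoboundary 0 0 (fun m => Finsupp.single ((0 : ℤ), m) (1 : ℂ)) ∧
    ¬ IsCoboundary 0 0 (fun m => (m : ℂ) • Finsupp.single ((0 : ℤ), m) (1 : ℂ)) := by
  refine ⟨?_, ?_, ?_, ?_⟩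
  · intro m n
    simp only [map_smul, tact_single', Int.cast_zero, mul_zero, zero_mul, add_zero, zero_add,
      neg_zero, zero_smul, smul_zero, one_smul]
    rw [add_comm n m]
    push_cast
    module
  · intro m n
    simp only [map_smul, tact_single', Int.cast_zero, mul_zero, zero_mul, add_zero, zero_add,
      neg_zero, zero_smul, smul_zero, one_smul]
    rw [add_comm n m]
    push_cast
    module
  · rintro ⟨u, hu⟩
    have h := DFunLike.congr_fun (hu 0) ((0 : ℤ), (0 : ℤ))
    rw [tact_zero_coeff'] at h
    simp at h
  · rintro ⟨u, hu⟩
    obtain ⟨n, hn⟩ := Infinite.exists_notMem_finset (u.support.image Prod.snd ∪ {0})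
    have hc : ((-n, n) : ℤ × ℤ) ∉ u.support := fun h =>
      hn (Finset.mem_union_left _ (Finset.mem_image_of_mem _ h))
    have hn0 : n ≠ 0 := fun h => hn (Finset.mem_union_right _ (by simp [h]))
    have h := DFunLike.congr_fun (hu n) ((0 : ℤ), n)
    rw [tact_n_coeff' u n hc] at h
    simp at h
    exact hn0 (by exact_mod_cast h)
end

section
/- The 1-cocycle δ_{1,1} of the Witt algebra with coefficients in 𝓕_1 ⊗ 𝓕_1 is not a 1-coboundary. -/
/-- The map `δ_{1,1} : 𝒲 → 𝓕_1 ⊗ 𝓕_1`. -/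
noncomputable def d11 (n : ℤ) : (ℤ × ℤ) →₀ ℂ :=
  if 1 ≤ n then
    ∑ i ∈ Finset.Icc (1 : ℤ) n, ((i : ℂ) * ((n : ℂ) - i)) • Finsupp.single (i, n - i) (1 : ℂ)
  else if n = 0 then 0
  else - ∑ i ∈ Finset.Icc n (-1 : ℤ),
    ((i : ℂ) * ((n : ℂ) - i)) • Finsupp.single (i, n - i) (1 : ℂ)

/-- the 1-cocycle `δ_{1,1}` is not a 1-coboundary. -/
theorem d11_not_coboundary : ¬ IsCoboundary 1 1 d11 := by
  rintro ⟨u, hu⟩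
  -- choose `a ≥ 1` larger than the first coordinate (in absolute value) of
  -- anything in the support of `u`
  set a : ℤ := (u.support.sup fun p : ℤ × ℤ => p.1.natAbs : ℕ) + 1 with ha
  have ha1 : 1 ≤ a := by omega
  have hn2 : ((a, -a) : ℤ × ℤ) ∉ u.support := by
    intro h
    have := Finset.le_sup (f := fun p : ℤ × ℤ => p.1.natAbs) h
    simp only at this
    omega
  have hn1 : ((-a, a) : ℤ × ℤ) ∉ u.support := by
    intro h
    have := Finset.le_sup (f := fun p : ℤ × ℤ => p.1.natAbs) h
    simp only at this
    omega
  -- the coefficient of `v_a ⊗ w_a` in `δ_{1,1}(L_{2a})` is `a²`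
  have h1' : d11 (2*a) (a,a) = (a:ℂ)*(a:ℂ) := by
    rw [d11, if_pos (by omega : (1:ℤ) ≤ 2*a)]
    rw [Finset.sum_apply']
    rw [Finset.sum_eq_single a]
    · rw [Finsupp.smul_apply, Finsupp.single_apply,
        if_pos (by rw [show 2*a - a = a by ring])]
      rw [smul_eq_mul, mul_one]
      push_cast; ring
    · intro i hi hne
      rw [Finsupp.smul_apply, Finsupp.single_apply, if_neg, smul_zero]
      intro h; exact hne (congrArg Prod.fst h)
    · intro h; exact absurd (Finset.mem_Icc.mpr ⟨ha1, by omega⟩) h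
  -- but the coefficient of `v_a ⊗ w_a` in `L_{2a} · u` is zero, since only
  -- `u (-a, a)` and `u (a, -a)` could contribute, and both vanish
  have h2' : (tact 1 1 (2*a) u) (a, a) = 0 := by
    rw [tact, Finsupp.lsum_apply, Finsupp.sum_apply]
    apply Finset.sum_eq_zero
    intro p hp
    simp only [LinearMap.toSpanSingleton_apply, Finsupp.smul_apply, Finsupp.add_apply,
      Finsupp.single_apply]
    rw [if_neg, if_neg, smul_zero, smul_zero, add_zero, smul_zero]
    · intro h
      have : p = (a, -a) := by
        rw [Prod.mk.injEq] at h
        obtain ⟨h1, h2⟩ := h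
        exact Prod.ext (by exact h1) (by omega)
      rw [this] at hp; exact hn2 hp
    · intro h
      have : p = (-a, a) := by
        rw [Prod.mk.injEq] at h
        obtain ⟨h1, h2⟩ := h
        exact Prod.ext (by omega) (by exact h2)
      rw [this] at hp; exact hn1 hp
  rw [hu (2*a), h2'] at h1'
  have haC : (a : ℂ) ≠ 0 := Int.cast_ne_zero.mpr (by omega)
  exact haC (by have := h1'.symm; rcases mul_eq_zero.mp this with h | h <;> exact h)
end
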